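/- Let P′ be a sub-probability measure with P_θ ≪ P′, P′ ≪ P_θ, and D_KL(P_θ ∥ P′) < ∞. If E is a nonnegative random variable with E_{P′}[E] ≤ 1, then E_θ[log E] = D_KL(P_θ ∥ P′) + E_θ[log(dR/dP_θ)] where dR = E dP′, and E_θ[log(dR/dP_θ)] ∈ [−∞, 0]; hence E_θ[log E] ≤ D_KL(P_θ ∥ P′). -/

import Mathlib

open MeasureTheory ENNReal Filter Set
open scoped Classical
noncomputable section

/-- The positive part of an extended real, as an extended nonnegative real. -/
def erealPos (a : EReal) : ℝ≥0∞ := if a = ⊤ then ⊤ else ENNReal.ofReal a.toReal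

/-- Generalized expectation `E[f] = E[f⁺] - E[f⁻]`, valued in the extended reals. -/
def eexp {Ω : Type*} {mΩ : MeasurableSpace Ω} (μ : Measure Ω) (f : Ω → EReal) : EReal :=
  ((∫⁻ ω, erealPos (f ω) ∂μ : ℝ≥0∞) : EReal) - ((∫⁻ ω, erealPos (-(f ω)) ∂μ : ℝ≥0∞) : EReal)

/-- The expectation of an extended-real random variable is (well-)defined when at least one of
the expectations of its positive and negative parts is finite. -/
def ExpDefined {Ω : Type*} {mΩ : MeasurableSpace Ω} (μ : Measure Ω) (f : Ω → EReal) : Prop :=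
  (∫⁻ ω, erealPos (f ω) ∂μ) < ⊤ ∨ (∫⁻ ω, erealPos (-(f ω)) ∂μ) < ⊤

/-- Logarithm on `[0,∞]`, with `log 0 = -∞` and `log ∞ = ∞`. -/
def elog (x : ℝ≥0∞) : EReal := if x = 0 then ⊥ else if x = ⊤ then ⊤ else ((Real.log x.toReal : ℝ) : EReal)

/-- Ratio on `[0,∞]` with the conventions `0/0 = 0` and `∞/∞ = 1`. -/
def eratio (a b : ℝ≥0∞) : ℝ≥0∞ := if a = ⊤ ∧ b = ⊤ then 1 else a / b

/-- `g` is a version of the conditional expectation of the nonnegative `h` given the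
sub-σ-field `m`, under the measure `μ`. -/
def IsCondExpNN {Ω : Type*} {mΩ : MeasurableSpace Ω} (m : MeasurableSpace Ω)
    (μ : @Measure Ω mΩ) (h g : Ω → ℝ≥0∞) : Prop :=
  Measurable[m] g ∧ ∀ A : Set Ω, MeasurableSet[m] A → ∫⁻ ω in A, g ω ∂μ = ∫⁻ ω in A, h ω ∂μ

/-- `g` is a universal (θ-free) version of the conditional expectation of `h` given `m`,
simultaneously under all measures `P θ`, `θ` ranging over a set `T` of parameters. -/
def IsUnivCondExpNN {Ω Θ : Type*} {mΩ : MeasurableSpace Ω} (m : MeasurableSpace Ω)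
    (P : Θ → @Measure Ω mΩ) (T : Set Θ) (h g : Ω → ℝ≥0∞) : Prop :=
  Measurable[m] g ∧ ∀ θ ∈ T, IsCondExpNN m (P θ) h g

/-- A sub-σ-field `m` is sufficient for the family `P` over the parameter set `T`:
every nonnegative measurable function admits a universal conditional expectation given `m`. -/
def IsSufficient {Ω Θ : Type*} {mΩ : MeasurableSpace Ω} (m : MeasurableSpace Ω)
    (P : Θ → @Measure Ω mΩ) (T : Set Θ) : Prop :=
  m ≤ mΩ ∧ ∀ h : Ω → ℝ≥0∞, Measurable[mΩ] h → ∃ g, IsUnivCondExpNN m P T h g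

/-- Kullback–Leibler divergence, valued in `[0,∞]` (as an extended real):
`∫ log(dμ/dν) dμ` when `μ ≪ ν`, and `+∞` otherwise. -/
def klDiv' {Ω : Type*} {mΩ : MeasurableSpace Ω} (μ ν : Measure Ω) : EReal :=
  if μ ≪ ν then eexp μ (fun ω => elog (μ.rnDeriv ν ω)) else ⊤

/-- `F : [0,∞] → [-∞,∞]` is the extension by limits of a concave utility `f : (0,∞) → ℝ`,
i.e. `F 0 = lim_{x↓0} f x`, `F ∞ = lim_{x→∞} f x`, and `F = f` in between. -/
def IsConcaveExtension (f : ℝ → ℝ) (F : ℝ≥0∞ → EReal) : Prop :=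
  ConcaveOn ℝ (Set.Ioi 0) f ∧
  (∀ x : ℝ≥0∞, x ≠ 0 → x ≠ ⊤ → F x = ((f x.toReal : ℝ) : EReal)) ∧
  Tendsto (fun x : ℝ => ((f x : ℝ) : EReal)) (nhdsWithin 0 (Set.Ioi 0)) (nhds (F 0)) ∧
  Tendsto (fun x : ℝ => ((f x : ℝ) : EReal)) atTop (nhds (F ⊤))

/-! ### Auxiliary lemmas -/

@[simp] lemma erealPos_bot : erealPos ⊥ = 0 := by simp [erealPos]
@[simp] lemma erealPos_top : erealPos ⊤ = ⊤ := by simp [erealPos]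
@[simp] lemma erealPos_coe' (r : ℝ) : erealPos (r : EReal) = ENNReal.ofReal r := by simp [erealPos]
@[simp] lemma elog_zero' : elog 0 = ⊥ := by simp [elog]
@[simp] lemma elog_top' : elog ⊤ = ⊤ := by simp [elog]

lemma elog_of (x : ℝ≥0∞) (h0 : x ≠ 0) (ht : x ≠ ⊤) :
    elog x = ((Real.log x.toReal : ℝ) : EReal) := by simp [elog, h0, ht]

lemma measurable_erealPos : Measurable erealPos := by
  unfold erealPos
  exact Measurable.ite (measurableSet_singleton ⊤) measurable_const
    (ENNReal.measurable_ofReal.comp measurable_ereal_toReal)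

lemma measurable_elog : Measurable elog := by
  unfold elog
  refine Measurable.ite (measurableSet_singleton 0) measurable_const ?_
  refine Measurable.ite (measurableSet_singleton ⊤) measurable_const ?_
  exact (Real.measurable_log.comp ENNReal.measurable_toReal).coe_real_ereal

lemma elog_inv (x : ℝ≥0∞) : elog x⁻¹ = -(elog x) := by
  rcases eq_or_ne x 0 with rfl | h0
  · simp
  rcases eq_or_ne x ⊤ with rfl | ht
  · simp
  rw [elog_of x h0 ht, elog_of x⁻¹ (by simp [ht]) (by simp [h0])]
  rw [ENNReal.toReal_inv, Real.log_inv]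
  exact EReal.coe_neg _

lemma ennreal_coe_ereal_eq (x : ℝ≥0∞) (hx : x ≠ ⊤) :
    (x : EReal) = ((x.toReal : ℝ) : EReal) := by
  lift x to NNReal using hx
  rw [ENNReal.coe_toReal, EReal.coe_nnreal_eq_coe_real]

lemma erealPos_elog_le (x : ℝ≥0∞) : erealPos (elog x) ≤ x := by
  rcases eq_or_ne x 0 with rfl | h0
  · simp
  rcases eq_or_ne x ⊤ with rfl | ht
  · simp
  rw [elog_of x h0 ht, erealPos_coe']
  calc ENNReal.ofReal (Real.log x.toReal) ≤ ENNReal.ofReal x.toReal :=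
        ENNReal.ofReal_le_ofReal (Real.log_le_self ENNReal.toReal_nonneg)
    _ = x := ENNReal.ofReal_toReal ht

lemma erealPos_elog_add_one_le (x : ℝ≥0∞) (ht : x ≠ ⊤) :
    erealPos (elog x) + 1 ≤ x + erealPos (-(elog x)) := by
  rcases eq_or_ne x 0 with rfl | h0
  · simp
  rw [elog_of x h0 ht, ← EReal.coe_neg, erealPos_coe', erealPos_coe']
  set t := x.toReal with hts
  have htpos : 0 < t := ENNReal.toReal_pos h0 ht
  have hlog : Real.log t ≤ t - 1 := Real.log_le_sub_one_of_pos htpos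
  have hx : x = ENNReal.ofReal t := (ENNReal.ofReal_toReal ht).symm
  rw [hx]
  rcases le_or_gt (Real.log t) 0 with hneg | hpos
  · rw [ENNReal.ofReal_eq_zero.mpr hneg, zero_add,
      ← ENNReal.ofReal_add htpos.le (neg_nonneg.mpr hneg), ← ENNReal.ofReal_one]
    exact ENNReal.ofReal_le_ofReal (by linarith)
  · calc ENNReal.ofReal (Real.log t) + 1 = ENNReal.ofReal (Real.log t + 1) := by
          rw [ENNReal.ofReal_add hpos.le zero_le_one, ENNReal.ofReal_one]
      _ ≤ ENNReal.ofReal t := ENNReal.ofReal_le_ofReal (by linarith)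
      _ ≤ ENNReal.ofReal t + ENNReal.ofReal (-Real.log t) := le_self_add

lemma erealPos_add_le (a b : EReal) : erealPos (a + b) ≤ erealPos a + erealPos b := by
  rcases eq_or_ne a ⊤ with rfl | hat
  · simp
  rcases eq_or_ne b ⊤ with rfl | hbt
  · simp
  rcases eq_or_ne a ⊥ with rfl | hab
  · simp
  rcases eq_or_ne b ⊥ with rfl | hbb
  · simp
  lift a to ℝ using ⟨hat, hab⟩
  lift b to ℝ using ⟨hbt, hbb⟩
  rw [← EReal.coe_add, erealPos_coe', erealPos_coe', erealPos_coe']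
  exact ENNReal.ofReal_add_le

lemma ofReal_max' (u : ℝ) : ENNReal.ofReal u = ENNReal.ofReal (max u 0) := by
  rcases le_total u 0 with h | h
  · rw [ENNReal.ofReal_eq_zero.mpr h, max_eq_right h, ENNReal.ofReal_zero]
  · rw [max_eq_left h]

lemma max_sub_max_neg (x : ℝ) : max x 0 - max (-x) 0 = x := by
  rcases le_total x 0 with h | h
  · rw [max_eq_right h, max_eq_left (by linarith)]; ring
  · rw [max_eq_left h, max_eq_right (by linarith)]; ring

lemma erealPos_key (a b : EReal) (hat : a ≠ ⊤) (hab : a ≠ ⊥) :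
    erealPos (a + b) + (erealPos (-a) + erealPos (-b)) =
      erealPos (-(a + b)) + (erealPos a + erealPos b) := by
  lift a to ℝ using ⟨hat, hab⟩
  rcases eq_or_ne b ⊤ with rfl | hbt
  · simp [EReal.coe_add_top]
  rcases eq_or_ne b ⊥ with rfl | hbb
  · simp [EReal.add_bot]
  lift b to ℝ using ⟨hbt, hbb⟩
  rw [← EReal.coe_add, ← EReal.coe_neg, ← EReal.coe_neg, ← EReal.coe_neg]
  simp only [erealPos_coe']
  rw [ofReal_max' (a+b), ofReal_max' (-a), ofReal_max' (-b), ofReal_max' (-(a+b)),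
    ofReal_max' a, ofReal_max' b,
    ← ENNReal.ofReal_add (le_max_right _ _) (le_max_right _ _),
    ← ENNReal.ofReal_add (le_max_right _ _) (add_nonneg (le_max_right _ _) (le_max_right _ _)),
    ← ENNReal.ofReal_add (le_max_right _ _) (le_max_right _ _),
    ← ENNReal.ofReal_add (le_max_right _ _) (add_nonneg (le_max_right _ _) (le_max_right _ _))]
  congr 1
  have h1 := max_sub_max_neg (a + b)
  have h2 := max_sub_max_neg a
  have h3 := max_sub_max_neg b
  linarith

/-- If `g` is finite a.e. and has integral at most `1` under a probability measure,
then `E[log g] ≤ 0`, and the positive part of `log g` has integral at most `1`. -/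
lemma eexp_elog_le_zero {Ω : Type*} {mΩ : MeasurableSpace Ω} (μ : Measure Ω)
    [IsProbabilityMeasure μ] (g : Ω → ℝ≥0∞) (hg : Measurable g)
    (hfin : ∀ᵐ ω ∂μ, g ω ≠ ⊤) (hint : ∫⁻ ω, g ω ∂μ ≤ 1) :
    eexp μ (fun ω => elog (g ω)) ≤ 0 ∧ ∫⁻ ω, erealPos (elog (g ω)) ∂μ ≤ 1 := by
  have hBple : ∫⁻ ω, erealPos (elog (g ω)) ∂μ ≤ 1 :=
    le_trans (lintegral_mono fun ω => erealPos_elog_le (g ω)) hint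
  refine ⟨?_, hBple⟩
  rcases eq_or_ne (∫⁻ ω, erealPos (-(elog (g ω))) ∂μ) ⊤ with hBm | hBm
  · simp only [eexp]
    rw [hBm, EReal.coe_ennreal_top, EReal.sub_top]
    exact bot_le
  · have hmp : Measurable fun ω => erealPos (elog (g ω)) :=
      measurable_erealPos.comp (measurable_elog.comp hg)
    have hmono : ∀ᵐ ω ∂μ, erealPos (elog (g ω)) + 1 ≤ g ω + erealPos (-(elog (g ω))) := by
      filter_upwards [hfin] with ω hω using erealPos_elog_add_one_le (g ω) hω
    have h1 : (∫⁻ ω, erealPos (elog (g ω)) ∂μ) + 1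
        ≤ (∫⁻ ω, erealPos (-(elog (g ω))) ∂μ) + 1 := by
      calc (∫⁻ ω, erealPos (elog (g ω)) ∂μ) + 1
          = ∫⁻ ω, (erealPos (elog (g ω)) + 1) ∂μ := by
            rw [lintegral_add_left hmp, lintegral_one, measure_univ]
        _ ≤ ∫⁻ ω, (g ω + erealPos (-(elog (g ω)))) ∂μ := lintegral_mono_ae hmono
        _ = (∫⁻ ω, g ω ∂μ) + ∫⁻ ω, erealPos (-(elog (g ω))) ∂μ := lintegral_add_left hg _
        _ ≤ 1 + ∫⁻ ω, erealPos (-(elog (g ω))) ∂μ := add_le_add_left hint _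
        _ = (∫⁻ ω, erealPos (-(elog (g ω))) ∂μ) + 1 := add_comm _ _
    have hle : ∫⁻ ω, erealPos (elog (g ω)) ∂μ ≤ ∫⁻ ω, erealPos (-(elog (g ω))) ∂μ := by
      rwa [ENNReal.add_le_add_iff_right ENNReal.one_ne_top] at h1
    have hBp : ∫⁻ ω, erealPos (elog (g ω)) ∂μ ≠ ⊤ := ne_top_of_le_ne_top ENNReal.one_ne_top hBple
    simp only [eexp]
    rw [ennreal_coe_ereal_eq _ hBp, ennreal_coe_ereal_eq _ hBm, ← EReal.coe_sub]
    have : (∫⁻ ω, erealPos (elog (g ω)) ∂μ).toReal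
        ≤ (∫⁻ ω, erealPos (-(elog (g ω))) ∂μ).toReal :=
      (ENNReal.toReal_le_toReal hBp hBm).mpr hle
    exact_mod_cast sub_nonpos.mpr this

/-- Additivity of `eexp` when one summand is a.e. finite with both parts integrable and the
other has integrable positive part. -/
lemma eexp_add_eq {Ω : Type*} {mΩ : MeasurableSpace Ω} (μ : Measure Ω)
    (f1 f2 fE : Ω → EReal) (hm1 : Measurable f1) (hm2 : Measurable f2) (hmE : Measurable fE)
    (hae : ∀ᵐ ω ∂μ, fE ω = f1 ω + f2 ω ∧ f1 ω ≠ ⊤ ∧ f1 ω ≠ ⊥)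
    (hAp : ∫⁻ ω, erealPos (f1 ω) ∂μ ≠ ⊤) (hAm : ∫⁻ ω, erealPos (-(f1 ω)) ∂μ ≠ ⊤)
    (hBp : ∫⁻ ω, erealPos (f2 ω) ∂μ ≠ ⊤) :
    eexp μ fE = eexp μ f1 + eexp μ f2 := by
  have mp1 : Measurable fun ω => erealPos (f1 ω) := measurable_erealPos.comp hm1
  have mp2 : Measurable fun ω => erealPos (f2 ω) := measurable_erealPos.comp hm2
  have mpE : Measurable fun ω => erealPos (fE ω) := measurable_erealPos.comp hmE
  have mm1 : Measurable fun ω => erealPos (-(f1 ω)) := measurable_erealPos.comp hm1.neg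
  have mm2 : Measurable fun ω => erealPos (-(f2 ω)) := measurable_erealPos.comp hm2.neg
  have mmE : Measurable fun ω => erealPos (-(fE ω)) := measurable_erealPos.comp hmE.neg
  have hkey : ∀ᵐ ω ∂μ, erealPos (fE ω) + (erealPos (-(f1 ω)) + erealPos (-(f2 ω)))
      = erealPos (-(fE ω)) + (erealPos (f1 ω) + erealPos (f2 ω)) := by
    filter_upwards [hae] with ω hω
    rw [hω.1]
    exact erealPos_key _ _ hω.2.1 hω.2.2
  have hsum : (∫⁻ ω, erealPos (fE ω) ∂μ)
        + ((∫⁻ ω, erealPos (-(f1 ω)) ∂μ) + ∫⁻ ω, erealPos (-(f2 ω)) ∂μ)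
      = (∫⁻ ω, erealPos (-(fE ω)) ∂μ)
        + ((∫⁻ ω, erealPos (f1 ω) ∂μ) + ∫⁻ ω, erealPos (f2 ω) ∂μ) := by
    have := lintegral_congr_ae hkey
    rwa [lintegral_add_left mpE, lintegral_add_left mm1,
      lintegral_add_left mmE, lintegral_add_left mp1] at this
  have hPle : ∫⁻ ω, erealPos (fE ω) ∂μ
      ≤ (∫⁻ ω, erealPos (f1 ω) ∂μ) + ∫⁻ ω, erealPos (f2 ω) ∂μ := by
    have hmono : ∀ᵐ ω ∂μ, erealPos (fE ω) ≤ erealPos (f1 ω) + erealPos (f2 ω) := by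
      filter_upwards [hae] with ω hω
      rw [hω.1]
      exact erealPos_add_le _ _
    calc ∫⁻ ω, erealPos (fE ω) ∂μ ≤ ∫⁻ ω, (erealPos (f1 ω) + erealPos (f2 ω)) ∂μ :=
          lintegral_mono_ae hmono
      _ = (∫⁻ ω, erealPos (f1 ω) ∂μ) + ∫⁻ ω, erealPos (f2 ω) ∂μ := lintegral_add_left mp1 _
  have hABne : (∫⁻ ω, erealPos (f1 ω) ∂μ) + (∫⁻ ω, erealPos (f2 ω) ∂μ) ≠ ⊤ :=
    ENNReal.add_ne_top.mpr ⟨hAp, hBp⟩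
  have hPp : ∫⁻ ω, erealPos (fE ω) ∂μ ≠ ⊤ := ne_top_of_le_ne_top hABne hPle
  rcases eq_or_ne (∫⁻ ω, erealPos (-(f2 ω)) ∂μ) ⊤ with hBm | hBm
  · have hPn : ∫⁻ ω, erealPos (-(fE ω)) ∂μ = ⊤ := by
      have hl : (∫⁻ ω, erealPos (-(fE ω)) ∂μ)
          + ((∫⁻ ω, erealPos (f1 ω) ∂μ) + ∫⁻ ω, erealPos (f2 ω) ∂μ) = ⊤ := by
        rw [← hsum, hBm, add_top, add_top]
      rcases ENNReal.add_eq_top.mp hl with h | h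
      · exact h
      · exact absurd h hABne
    simp only [eexp]
    rw [hPn, hBm, EReal.coe_ennreal_top, EReal.sub_top, EReal.sub_top, EReal.add_bot]
  · have hPn : ∫⁻ ω, erealPos (-(fE ω)) ∂μ ≠ ⊤ := by
      have hts : (∫⁻ ω, erealPos (-(fE ω)) ∂μ)
          + ((∫⁻ ω, erealPos (f1 ω) ∂μ) + ∫⁻ ω, erealPos (f2 ω) ∂μ) ≠ ⊤ := by
        rw [← hsum]
        exact ENNReal.add_ne_top.mpr ⟨hPp, ENNReal.add_ne_top.mpr ⟨hAm, hBm⟩⟩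
      exact fun h => hts (by rw [h, top_add])
    have hreal := congrArg ENNReal.toReal hsum
    rw [ENNReal.toReal_add hPp (ENNReal.add_ne_top.mpr ⟨hAm, hBm⟩),
      ENNReal.toReal_add hAm hBm,
      ENNReal.toReal_add hPn hABne, ENNReal.toReal_add hAp hBp] at hreal
    simp only [eexp]
    rw [ennreal_coe_ereal_eq _ hPp, ennreal_coe_ereal_eq _ hPn, ennreal_coe_ereal_eq _ hAp,
      ennreal_coe_ereal_eq _ hAm, ennreal_coe_ereal_eq _ hBp, ennreal_coe_ereal_eq _ hBm,
      ← EReal.coe_sub, ← EReal.coe_sub, ← EReal.coe_sub, ← EReal.coe_add]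
    exact_mod_cast congrArg (fun r : ℝ => (r : EReal)) (by linarith)

/-- Let `P'` be a sub-probability measure mutually absolutely continuous with the probability
measure `P_θ =: μ`, with `D_KL(μ ∥ P') < ∞`. If `E ≥ 0` satisfies `E_{P'}[E] ≤ 1`, then, with
`R := E · P'`, `E_μ[log E] = D_KL(μ ∥ P') + E_μ[log(dR/dμ)]`, where
`E_μ[log(dR/dμ)] ∈ [-∞, 0]`; hence `E_μ[log E] ≤ D_KL(μ ∥ P')`. -/
theorem rao_blackwell_stmt6
    {Ω : Type*} {mΩ : MeasurableSpace Ω} (μ : Measure Ω) [IsProbabilityMeasure μ]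
    (P' : Measure Ω) (hsub : P' Set.univ ≤ 1)
    (hac : μ ≪ P') (hac' : P' ≪ μ)
    (hKL : klDiv' μ P' < ⊤)
    (E : Ω → ℝ≥0∞) (hE : Measurable[mΩ] E) (hExp : ∫⁻ ω, E ω ∂P' ≤ 1) :
    eexp μ (fun ω => elog (E ω)) =
        klDiv' μ P' + eexp μ (fun ω => elog ((P'.withDensity E).rnDeriv μ ω)) ∧
      eexp μ (fun ω => elog ((P'.withDensity E).rnDeriv μ ω)) ≤ 0 ∧
      eexp μ (fun ω => elog (E ω)) ≤ klDiv' μ P' := by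
  haveI : IsFiniteMeasure P' := ⟨lt_of_le_of_lt hsub ENNReal.one_lt_top⟩
  set R := P'.withDensity E with hRdef
  haveI : IsFiniteMeasure R := ⟨by
    rw [hRdef, withDensity_apply _ MeasurableSet.univ, setLIntegral_univ]
    exact lt_of_le_of_lt hExp ENNReal.one_lt_top⟩
  set d := μ.rnDeriv P' with hddef
  set g := R.rnDeriv μ with hgdef
  -- basic a.e. facts
  have hEfin : ∀ᵐ ω ∂P', E ω ≠ ⊤ := by
    filter_upwards [ae_lt_top hE (lt_of_le_of_lt hExp ENNReal.one_lt_top).ne] with ω h using h.ne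
  have h1 : R.rnDeriv μ =ᵐ[μ] fun ω => E ω * P'.rnDeriv μ ω :=
    Measure.rnDeriv_withDensity_left hE.aemeasurable hEfin
  have h2 : (fun ω => (μ.rnDeriv P' ω)⁻¹) =ᵐ[μ] P'.rnDeriv μ := Measure.inv_rnDeriv hac
  have hpos : ∀ᵐ ω ∂μ, 0 < d ω := Measure.rnDeriv_pos hac
  have hfin : ∀ᵐ ω ∂μ, d ω < ⊤ := (Measure.rnDeriv_lt_top μ P').filter_mono hac.ae_le
  have hgrw : ∀ᵐ ω ∂μ, g ω = E ω * (d ω)⁻¹ := by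
    filter_upwards [h1, h2] with ω hω1 hω2
    rw [hgdef, hω1, ← hω2]
  -- the key pointwise a.e. identity
  have hae : ∀ᵐ ω ∂μ, elog (E ω) = elog (d ω) + elog (g ω)
      ∧ elog (d ω) ≠ ⊤ ∧ elog (d ω) ≠ ⊥ := by
    filter_upwards [hpos, hfin, hgrw] with ω hp hf hg
    have hd0 : d ω ≠ 0 := hp.ne'
    have hdt : d ω ≠ ⊤ := hf.ne
    have hlogd := elog_of (d ω) hd0 hdt
    refine ⟨?_, by rw [hlogd]; exact EReal.coe_ne_top _, by rw [hlogd]; exact EReal.coe_ne_bot _⟩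
    rcases eq_or_ne (E ω) 0 with h0 | h0
    · rw [h0, hg, h0, zero_mul, elog_zero', EReal.add_bot]
    rcases eq_or_ne (E ω) ⊤ with hT | hT
    · rw [hT, hg, hT, ENNReal.top_mul (ENNReal.inv_ne_zero.mpr hdt), elog_top', hlogd,
        EReal.coe_add_top]
    · have hg0 : E ω * (d ω)⁻¹ ≠ 0 := mul_ne_zero h0 (ENNReal.inv_ne_zero.mpr hdt)
      have hgt : E ω * (d ω)⁻¹ ≠ ⊤ := ENNReal.mul_ne_top hT (ENNReal.inv_ne_top.mpr hd0)
      rw [hg, elog_of _ h0 hT, elog_of _ hg0 hgt, hlogd, ← EReal.coe_add]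
      have hE0 : (E ω).toReal ≠ 0 := (ENNReal.toReal_pos h0 hT).ne'
      have hd0' : (d ω).toReal⁻¹ ≠ 0 := inv_ne_zero (ENNReal.toReal_pos hd0 hdt).ne'
      rw [EReal.coe_eq_coe_iff, ENNReal.toReal_mul, ENNReal.toReal_inv,
        Real.log_mul hE0 hd0', Real.log_inv]
      ring
  -- integrability facts for f1 = elog ∘ d
  have hAm_le : ∫⁻ ω, erealPos (-(elog (d ω))) ∂μ ≤ 1 := by
    have heq : ∀ ω, erealPos (-(elog (d ω))) = erealPos (elog (d ω)⁻¹) := fun ω => by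
      rw [elog_inv]
    calc ∫⁻ ω, erealPos (-(elog (d ω))) ∂μ = ∫⁻ ω, erealPos (elog (d ω)⁻¹) ∂μ := by
          simp_rw [heq]
      _ ≤ ∫⁻ ω, (d ω)⁻¹ ∂μ := lintegral_mono fun ω => erealPos_elog_le _
      _ = ∫⁻ ω, P'.rnDeriv μ ω ∂μ := lintegral_congr_ae h2
      _ ≤ P' Set.univ := Measure.lintegral_rnDeriv_le
      _ ≤ 1 := hsub
  have hAm_ne : ∫⁻ ω, erealPos (-(elog (d ω))) ∂μ ≠ ⊤ :=
    ne_top_of_le_ne_top ENNReal.one_ne_top hAm_le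
  have hKLeq : klDiv' μ P' = eexp μ (fun ω => elog (d ω)) := by
    rw [klDiv', if_pos hac]
  have hAp_ne : ∫⁻ ω, erealPos (elog (d ω)) ∂μ ≠ ⊤ := by
    intro h
    rw [hKLeq] at hKL
    simp only [eexp] at hKL
    rw [h, EReal.coe_ennreal_top, ennreal_coe_ereal_eq _ hAm_ne, EReal.top_sub_coe] at hKL
    exact lt_irrefl _ hKL
  -- facts for f2 = elog ∘ g
  have hgfin : ∀ᵐ ω ∂μ, g ω ≠ ⊤ := by
    filter_upwards [Measure.rnDeriv_lt_top R μ] with ω h using h.ne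
  have hgint : ∫⁻ ω, g ω ∂μ ≤ 1 := by
    refine le_trans Measure.lintegral_rnDeriv_le ?_
    rw [hRdef, withDensity_apply _ MeasurableSet.univ, setLIntegral_univ]
    exact hExp
  obtain ⟨hS_le, hBp_le⟩ :=
    eexp_elog_le_zero μ g (Measure.measurable_rnDeriv R μ) hgfin hgint
  have hBp_ne : ∫⁻ ω, erealPos (elog (g ω)) ∂μ ≠ ⊤ :=
    ne_top_of_le_ne_top ENNReal.one_ne_top hBp_le
  -- main decomposition
  have hmain : eexp μ (fun ω => elog (E ω))
      = eexp μ (fun ω => elog (d ω)) + eexp μ (fun ω => elog (g ω)) :=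
    eexp_add_eq μ (fun ω => elog (d ω)) (fun ω => elog (g ω)) (fun ω => elog (E ω))
      (measurable_elog.comp (Measure.measurable_rnDeriv μ P'))
      (measurable_elog.comp (Measure.measurable_rnDeriv R μ))
      (measurable_elog.comp hE) hae hAp_ne hAm_ne hBp_ne
  refine ⟨by rw [hmain, hKLeq], hS_le, ?_⟩
  calc eexp μ (fun ω => elog (E ω))
      = klDiv' μ P' + eexp μ (fun ω => elog (g ω)) := by rw [hmain, hKLeq]
    _ ≤ klDiv' μ P' + 0 := add_le_add_right hS_le _
    _ = klDiv' μ P' := add_zero _
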